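/- Let A be a k-algebra with a complete set of orthogonal idempotents e_1,…,e_n, and suppose there is an injective algebra homomorphism τ: A → M_n(B) to a matrix ring over a commutative integral domain B with τ(e_i) = e_{ii}, τ(e_j A e_i) ⊆ B·e_{ji}, and such that for all i, j there exists a nonzero element r ∈ e_j A e_i (connectivity). Then A is a prime ring: for nonzero p ∈ e_j A e_i and q ∈ e_ℓ A e_k, we have q A p ≠ 0. -/

import Mathlib

/-- Homotopy algebras are prime: a k-algebra with a complete set of orthogonal
idempotents, an injective single-entry impression into a matrix ring over a
commutative integral domain, and connectivity (a nonzero element of e_j A e_i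
for every pair i, j) satisfies: for nonzero p ∈ e_j A e_i and q ∈ e_ℓ A e_m,
q A p ≠ 0. -/
theorem stmt_5 {k B A : Type} [Field k] [CommRing B] [IsDomain B] [Algebra k B]
    [Ring A] [Algebra k A] {n : ℕ}
    (τ : A →ₐ[k] Matrix (Fin n) (Fin n) B) (hinj : Function.Injective τ)
    (e : Fin n → A)
    (hid : ∀ i, e i * e i = e i)
    (horth : ∀ i j, i ≠ j → e i * e j = 0)
    (hsum : ∑ i, e i = 1)
    (he : ∀ i, τ (e i) = Matrix.single i i 1)
    (hcorner : ∀ (i j : Fin n) (x : A), e j * x * e i = x →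
      ∃ b : B, τ x = Matrix.single j i b)
    (hconn : ∀ i j : Fin n, ∃ r : A, e j * r * e i = r ∧ r ≠ 0) :
    ∀ (i j m l : Fin n) (p q : A),
      e j * p * e i = p → p ≠ 0 →
      e l * q * e m = q → q ≠ 0 →
      ∃ a : A, q * a * p ≠ 0 := by
  intro i j m l p q hp hp0 hq hq0
  obtain ⟨r, hr, hr0⟩ := hconn j m
  refine ⟨r, ?_⟩
  obtain ⟨α, hα⟩ := hcorner i j p hp
  obtain ⟨ρ, hρ⟩ := hcorner j m r hr
  obtain ⟨β, hβ⟩ := hcorner m l q hq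
  have nz : ∀ (a b : Fin n) (x : A) (c : B), τ x = Matrix.single a b c →
      x ≠ 0 → c ≠ 0 := by
    intro a b x c hx hx0 hc
    apply hx0
    apply hinj
    rw [hx, map_zero, hc, Matrix.single_zero]
  have hα0 := nz _ _ _ _ hα hp0
  have hρ0 := nz _ _ _ _ hρ hr0
  have hβ0 := nz _ _ _ _ hβ hq0
  intro h
  have : τ (q * r * p) = Matrix.single l i (β * ρ * α) := by
    rw [map_mul, map_mul, hα, hρ, hβ, Matrix.single_mul_single_same,
      Matrix.single_mul_single_same]
  rw [h, map_zero] at this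
  have := congrFun (congrFun this.symm l) i
  rw [Matrix.single_apply_same] at this
  simp only [Matrix.zero_apply] at this
  exact (mul_ne_zero (mul_ne_zero hβ0 hρ0) hα0) this
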